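/- Let F = 𝔽_{2^m}, let S ⊆ F with 0 ∉ S, 1 ∈ S, and S generating the additive group of F, and let c, d ∈ F with c + d ∈ S, c ≠ 0, c ≠ 1. Suppose Γ = Cay(F, S) has PEST from the edge (0,1) to the edge (c,d) at time t > 0. Fix x₀ ∈ F with Tr(c x₀) = 0 and Tr(x₀) = 1, and let M = gcd{λ_{x₀} − λ_x : x ∈ T₁, x ≠ x₀}. Then t = (2u+1)π/M for some non-negative integer u; in particular, the minimum time at which Γ has PEST from (0,1) to (c,d) is π/M. -/

import Mathlib

open Matrix Finset

noncomputable section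

noncomputable instance (m : ℕ) : Fintype (GaloisField 2 m) := Fintype.ofFinite _
noncomputable instance (m : ℕ) : DecidableEq (GaloisField 2 m) := Classical.decEq _

/-- The absolute trace map `Tr : 𝔽_{2^m} → 𝔽₂`. -/
def Ftr {m : ℕ} (x : GaloisField 2 m) : ZMod 2 :=
  Algebra.trace (ZMod 2) (GaloisField 2 m) x

/-- The adjacency matrix of the Cayley (cubelike) graph `Cay(G, S)`. -/
def adjMatrix {G : Type*} [AddCommGroup G] [Fintype G] [DecidableEq G]
    (S : Finset G) : Matrix G G ℂ :=
  fun u v => if u + v ∈ S then 1 else 0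

/-- The transfer matrix `H(t) = exp(i t A)`. -/
def transferMatrix {G : Type*} [AddCommGroup G] [Fintype G] [DecidableEq G]
    (S : Finset G) (t : ℝ) : Matrix G G ℂ :=
  NormedSpace.exp (Complex.I • ((t : ℂ) • adjMatrix S))

/-- The standard basis vector `e_a` of `ℂ^V`. -/
def stdBasis {G : Type*} [DecidableEq G] (a : G) : G → ℂ :=
  fun v => if v = a then 1 else 0

/-- Perfect edge state transfer from the edge `(a,b)` to the edge `(c,d)` at time `t`:
`|(1/2)(e_c - e_d)ᵀ H(t)(e_a - e_b)|² = 1`. -/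
def hasPEST {G : Type*} [AddCommGroup G] [Fintype G] [DecidableEq G]
    (S : Finset G) (a b c d : G) (t : ℝ) : Prop :=
  ‖(1 / 2 : ℂ) * dotProduct (stdBasis c - stdBasis d)
      (transferMatrix S t *ᵥ (stdBasis a - stdBasis b))‖ ^ 2 = 1

/-- The eigenvalue `λ_x = ∑_{s ∈ S} (-1)^{Tr(xs)}` of a cubelike graph on `𝔽_{2^m}`. -/
def lamF {m : ℕ} (S : Finset (GaloisField 2 m)) (x : GaloisField 2 m) : ℤ :=
  ∑ s ∈ S, (-1) ^ (Ftr (x * s)).val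


/-! ### Auxiliary machinery -/

section Aux

open Complex

abbrev F2 (m : ℕ) := GaloisField 2 m

/-- the sign character of `ZMod 2` with values in `ℂ` -/
def eps (a : ZMod 2) : ℂ := (-1) ^ a.val

lemma zmod2_cases (a : ZMod 2) : a = 0 ∨ a = 1 := by
  fin_cases a
  · exact Or.inl rfl
  · exact Or.inr rfl

lemma eps_add (a b : ZMod 2) : eps (a + b) = eps a * eps b := by
  unfold eps
  rw [ZMod.val_add, ← pow_add, ← neg_one_pow_eq_pow_mod_two]

lemma eps_zero : eps 0 = 1 := rfl

lemma eps_one : eps 1 = -1 := by norm_num [eps, ZMod.val_one]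

lemma eps_abs (a : ZMod 2) : ‖eps a‖ = 1 := by
  rcases zmod2_cases a with h | h <;> subst h <;> simp [eps_zero, eps_one]

lemma eps_mul_self (a : ZMod 2) : eps a * eps a = 1 := by
  rcases zmod2_cases a with h | h <;> rw [h]
  · rw [eps_zero]; ring
  · rw [eps_one]; ring

variable {m : ℕ}

lemma Ftr_add (x y : GaloisField 2 m) : Ftr (x + y) = Ftr x + Ftr y := map_add _ _ _

lemma Ftr_zero : Ftr (0 : GaloisField 2 m) = 0 := map_zero _

lemma char_self (a : GaloisField 2 m) : a + a = 0 := by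
  have h : (2 : GaloisField 2 m) = 0 := by
    exact_mod_cast CharP.cast_eq_zero (GaloisField 2 m) 2
  calc a + a = 2 * a := by ring
  _ = 0 := by rw [h, zero_mul]

lemma add_cancel {x y : F2 m} (h : x + y = 0) : x = y := by
  have := congrArg (fun u => u + y) h
  simpa [add_assoc, char_self] using this

lemma exists_Ftr_mul_one {z : GaloisField 2 m} (hz : z ≠ 0) :
    ∃ w, Ftr (z * w) = 1 := by
  obtain ⟨y, hy⟩ := Algebra.trace_surjective (ZMod 2) (GaloisField 2 m) 1
  exact ⟨z⁻¹ * y, by rw [← mul_assoc, mul_inv_cancel₀ hz, one_mul]; exact hy⟩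

lemma char_sum {z : GaloisField 2 m} (hz : z ≠ 0) :
    ∑ v : GaloisField 2 m, eps (Ftr (z * v)) = 0 := by
  obtain ⟨w, hw⟩ := exists_Ftr_mul_one hz
  have h1 : (∑ v : GaloisField 2 m, eps (Ftr (z * v))) =
      ∑ v : GaloisField 2 m, eps (Ftr (z * (v + w))) := by
    refine Fintype.sum_equiv (Equiv.addRight w) _ _ (fun v => ?_)
    simp only [Equiv.coe_addRight]
    rw [add_assoc, char_self, add_zero]
  have h2 : ∀ v : GaloisField 2 m, eps (Ftr (z * (v + w))) = - eps (Ftr (z * v)) := by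
    intro v
    rw [mul_add, show Ftr (z*v + z*w) = Ftr (z*v) + Ftr (z*w) from map_add _ _ _, eps_add, hw,
      eps_one]
    ring
  simp_rw [h2] at h1
  rw [Finset.sum_neg_distrib] at h1
  have h3 : (2:ℂ) * ∑ v : GaloisField 2 m, eps (Ftr (z * v)) = 0 := by
    linear_combination h1
  rcases mul_eq_zero.mp h3 with h | h
  · norm_num at h
  · exact h

lemma card_GF (hm : 1 ≤ m) : Fintype.card (GaloisField 2 m) = 2 ^ m := by
  rw [← Nat.card_eq_fintype_card]; exact GaloisField.card 2 m (by omega)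

lemma card_T1 (hm : 1 ≤ m) :
    2 * (univ.filter (fun x : GaloisField 2 m => Ftr x = 1)).card = 2 ^ m := by
  obtain ⟨a, ha⟩ := @exists_Ftr_mul_one m 1 one_ne_zero
  rw [one_mul] at ha
  have key : (univ.filter (fun x : GaloisField 2 m => ¬ Ftr x = 1)).card
      = (univ.filter (fun x : GaloisField 2 m => Ftr x = 1)).card := by
    apply Finset.card_bij (fun x _ => x + a)
    · intro x hx
      simp only [mem_filter, mem_univ, true_and] at hx ⊢
      rw [show Ftr (x + a) = Ftr x + Ftr a from map_add _ _ _, ha]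
      rcases zmod2_cases (Ftr x) with h | h
      · rw [h, zero_add]
      · exact absurd h hx
    · intro x hx y hy hxy
      have := congrArg (fun u => u + a) hxy
      simpa [add_assoc, char_self] using this
    · intro y hy
      refine ⟨y + a, ?_, by rw [add_assoc, char_self, add_zero]⟩
      simp only [mem_filter, mem_univ, true_and] at hy ⊢
      rw [show Ftr (y + a) = Ftr y + Ftr a from map_add _ _ _, ha, hy]
      decide
  have h2 := Finset.card_filter_add_card_filter_not
    (s := (univ : Finset (GaloisField 2 m))) (p := fun x => Ftr x = 1)
  rw [Finset.card_univ, card_GF hm] at h2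
  omega

lemma zmod2_add_cases (a b : ZMod 2) (h : a + b = 1) : (a = 1 ∧ b = 0) ∨ (a = 0 ∧ b = 1) := by
  rcases zmod2_cases a with ha | ha <;> rcases zmod2_cases b with hb | hb <;>
    subst ha <;> subst hb <;> simp_all

lemma exists_tr {a b : GaloisField 2 m} (ha : a ≠ 0) (hb : b ≠ 0) (hab : a ≠ b) :
    ∃ x, Ftr (a * x) = 1 ∧ Ftr (b * x) = 0 := by
  obtain ⟨u, hu⟩ := exists_Ftr_mul_one ha
  rcases zmod2_cases (Ftr (b * u)) with h | h
  · exact ⟨u, hu, h⟩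
  · have hab' : a + b ≠ 0 := fun h' => hab (by
      have := congrArg (fun z => z + b) h'
      simpa [add_assoc, char_self] using this)
    obtain ⟨v, hv⟩ := exists_Ftr_mul_one hab'
    rw [add_mul, Ftr_add] at hv
    rcases zmod2_add_cases _ _ hv with ⟨h1, h2⟩ | ⟨h1, h2⟩
    · exact ⟨v, h1, h2⟩
    · refine ⟨u + v, ?_, ?_⟩
      · rw [mul_add, Ftr_add, hu, h1]; decide
      · rw [mul_add, Ftr_add, h, h2]; decide

/-! ### The character matrix and the transfer matrix -/

/-- the character matrix -/
def Kmat (m : ℕ) : Matrix (F2 m) (F2 m) ℂ := fun x v => eps (Ftr (x * v))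

lemma lamF_eq (S : Finset (F2 m)) (x : F2 m) :
    (lamF S x : ℂ) = ∑ s ∈ S, eps (Ftr (x * s)) := by
  unfold lamF eps; push_cast; rfl

lemma Kmat_mul_Kmat (hm : 1 ≤ m) :
    Kmat m * Kmat m = ((2:ℂ)^m) • (1 : Matrix (F2 m) (F2 m) ℂ) := by
  ext x y
  rw [Matrix.mul_apply]
  simp only [Kmat, Matrix.smul_apply, Matrix.one_apply, smul_eq_mul]
  by_cases h : x = y
  · subst h
    have h1 : ∀ v : F2 m, eps (Ftr (x * v)) * eps (Ftr (v * x)) = 1 := by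
      intro v; rw [mul_comm v x]; exact eps_mul_self _
    simp_rw [h1]
    simp [card_GF hm]
  · have hz : x + y ≠ 0 := fun hxy => h (add_cancel hxy)
    have h1 : ∀ v : F2 m, eps (Ftr (x * v)) * eps (Ftr (v * y)) = eps (Ftr ((x+y) * v)) := by
      intro v
      rw [mul_comm v y, add_mul, Ftr_add, eps_add]
    simp_rw [h1]
    rw [char_sum hz]
    simp [h]

lemma adj_mul_Kmat (S : Finset (F2 m)) :
    adjMatrix S * Kmat m = Kmat m * Matrix.diagonal (fun x => (lamF S x : ℂ)) := by
  ext u x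
  rw [Matrix.mul_apply, Matrix.mul_diagonal]
  simp only [adjMatrix, Kmat, ite_mul, one_mul, zero_mul]
  have h1 : (∑ v : F2 m, if u + v ∈ S then eps (Ftr (v * x)) else 0)
      = ∑ w : F2 m, if w ∈ S then eps (Ftr ((u + w) * x)) else 0 := by
    refine (Fintype.sum_equiv (Equiv.addLeft u) _ _ (fun w => ?_)).symm
    simp only [Equiv.coe_addLeft]
    simp only [← add_assoc, char_self, zero_add]
  rw [h1, Finset.sum_ite_mem, Finset.univ_inter, lamF_eq, Finset.mul_sum]
  refine Finset.sum_congr rfl (fun w hw => ?_)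
  rw [add_mul, Ftr_add, eps_add, mul_comm w x]

/-- the inverse of the character matrix -/
def Kinv (m : ℕ) : Matrix (F2 m) (F2 m) ℂ := ((2:ℂ)^m)⁻¹ • Kmat m

lemma q_ne_zero : ((2:ℂ)^m) ≠ 0 := pow_ne_zero _ two_ne_zero

lemma Kmat_mul_Kinv (hm : 1 ≤ m) : Kmat m * Kinv m = 1 := by
  rw [Kinv, Matrix.mul_smul, Kmat_mul_Kmat hm, smul_smul, inv_mul_cancel₀ q_ne_zero, one_smul]

lemma Kinv_mul_Kmat (hm : 1 ≤ m) : Kinv m * Kmat m = 1 := by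
  rw [Kinv, Matrix.smul_mul, Kmat_mul_Kmat hm, smul_smul, inv_mul_cancel₀ q_ne_zero, one_smul]

lemma isUnit_Kmat (hm : 1 ≤ m) : IsUnit (Kmat m) :=
  ⟨⟨Kmat m, Kinv m, Kmat_mul_Kinv hm, Kinv_mul_Kmat hm⟩, rfl⟩

lemma Kmat_inv (hm : 1 ≤ m) : (Kmat m)⁻¹ = Kinv m :=
  Matrix.inv_eq_right_inv (Kmat_mul_Kinv hm)

lemma transfer_eq (hm : 1 ≤ m) (S : Finset (F2 m)) (t : ℝ) :
    transferMatrix S t =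
      Kmat m * Matrix.diagonal (fun x => Complex.exp (Complex.I * t * (lamF S x))) * Kinv m := by
  have hA : adjMatrix S = Kmat m * Matrix.diagonal (fun x => (lamF S x : ℂ)) * Kinv m := by
    calc adjMatrix S = adjMatrix S * (Kmat m * Kinv m) := by rw [Kmat_mul_Kinv hm, mul_one]
    _ = (adjMatrix S * Kmat m) * Kinv m := by rw [mul_assoc]
    _ = _ := by rw [adj_mul_Kmat]
  have hd : ((Complex.I * t) • (Matrix.diagonal (fun x => (lamF S x : ℂ))))
      = Matrix.diagonal (fun x => Complex.I * t * (lamF S x)) := by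
    rw [← Matrix.diagonal_smul]
    congr 1
  have harg : Complex.I • ((t:ℂ) • adjMatrix S) =
      Kmat m * Matrix.diagonal (fun x => Complex.I * t * (lamF S x)) * Kinv m := by
    rw [hA, smul_smul, ← Matrix.smul_mul, ← Matrix.mul_smul, hd]
  have hexp : (NormedSpace.exp (fun x : F2 m => Complex.I * t * (lamF S x)))
      = fun x => Complex.exp (Complex.I * t * (lamF S x)) := by
    funext x
    rw [Pi.coe_exp, ← Complex.exp_eq_exp_ℂ]
  rw [transferMatrix, harg, ← Kmat_inv hm, Matrix.exp_conj _ _ (isUnit_Kmat hm),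
    Matrix.exp_diagonal, hexp, Kmat_inv hm]

lemma transfer_apply (hm : 1 ≤ m) (S : Finset (F2 m)) (t : ℝ) (u v : F2 m) :
    transferMatrix S t u v = ((2:ℂ)^m)⁻¹ *
      ∑ x : F2 m, Complex.exp (Complex.I * t * (lamF S x)) * eps (Ftr (u*x)) * eps (Ftr (x*v)) := by
  rw [transfer_eq hm, Matrix.mul_apply]
  simp only [Matrix.mul_diagonal, Kinv, Matrix.smul_apply, Kmat, smul_eq_mul]
  rw [Finset.mul_sum]
  refine Finset.sum_congr rfl (fun x _ => ?_)
  ring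

lemma pest_val (hm : 1 ≤ m) (S : Finset (F2 m)) (c d : F2 m) (t : ℝ) :
    (1/2:ℂ) * dotProduct (_root_.stdBasis c - _root_.stdBasis d)
        (transferMatrix S t *ᵥ (_root_.stdBasis (0:F2 m) - _root_.stdBasis 1))
    = ((2:ℂ)^m)⁻¹ * ∑ x ∈ univ.filter (fun x : F2 m => Ftr x = 1),
        Complex.exp (Complex.I * t * (lamF S x)) * (eps (Ftr (c*x)) - eps (Ftr (d*x))) := by
  have hw : ∀ u, (transferMatrix S t *ᵥ (_root_.stdBasis (0:F2 m) - _root_.stdBasis 1)) u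
      = transferMatrix S t u 0 - transferMatrix S t u 1 := by
    intro u
    simp [Matrix.mulVec, dotProduct, _root_.stdBasis, mul_sub, Finset.sum_sub_distrib,
      mul_ite, mul_one, mul_zero, Finset.sum_ite_eq']
  have hd : dotProduct (_root_.stdBasis c - _root_.stdBasis d)
      (transferMatrix S t *ᵥ (_root_.stdBasis (0:F2 m) - _root_.stdBasis 1))
      = (transferMatrix S t c 0 - transferMatrix S t c 1)
        - (transferMatrix S t d 0 - transferMatrix S t d 1) := by
    simp only [dotProduct, Pi.sub_apply, _root_.stdBasis, sub_mul, ite_mul, one_mul, zero_mul,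
      Finset.sum_sub_distrib, Finset.sum_ite_eq', Finset.mem_univ, if_true]
    rw [hw, hw]
  rw [hd, transfer_apply hm, transfer_apply hm, transfer_apply hm, transfer_apply hm,
    Finset.sum_filter]
  rw [← mul_sub, ← mul_sub, ← mul_sub, ← Finset.sum_sub_distrib, ← Finset.sum_sub_distrib,
    ← Finset.sum_sub_distrib, one_div, ← mul_assoc, mul_comm ((2:ℂ)⁻¹), mul_assoc,
    Finset.mul_sum]
  refine congrArg _ (Finset.sum_congr rfl (fun x _ => ?_))
  simp only [mul_zero, mul_one, Ftr_zero, eps_zero]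
  rcases zmod2_cases (Ftr x) with h | h
  · rw [h, eps_zero, if_neg (by decide : ¬ (0:ZMod 2) = 1)]
    ring
  · rw [h, eps_one, if_pos rfl]
    ring

/-! ### Analytic helpers -/

lemma abs_exp_I_int (t : ℝ) (n : ℤ) : ‖Complex.exp (Complex.I * t * n)‖ = 1 := by
  have h : Complex.I * t * n = ((t * n : ℝ) : ℂ) * Complex.I := by push_cast; ring
  rw [h, Complex.norm_exp_ofReal_mul_I]

lemma unit_re_one {w : ℂ} (h1 : ‖w‖ = 1) (h2 : w.re = 1) : w = 1 := by
  have h4 := Complex.sq_norm w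
  rw [h1, Complex.normSq_apply] at h4
  have h5 : w.im * w.im = 0 := by nlinarith
  exact Complex.ext h2 (mul_self_eq_zero.mp h5)

/-! ### The core rigidity lemma -/

lemma main_core (hm : 1 ≤ m) (S : Finset (F2 m)) (h0 : (0:F2 m) ∉ S)
    (c d : F2 m) (hcd : c + d ∈ S)
    (t : ℝ) (hP : hasPEST S 0 1 c d t) :
    d = c + 1 ∧ ∀ x y : F2 m, Ftr x = 1 → Ftr y = 1 →
      eps (Ftr (c*x)) * Complex.exp (Complex.I * t * (lamF S x)) =
      eps (Ftr (c*y)) * Complex.exp (Complex.I * t * (lamF S y)) := by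
  set T1 := univ.filter (fun x : F2 m => Ftr x = 1) with hT1
  set f : F2 m → ℂ :=
    fun x => Complex.exp (Complex.I * t * (lamF S x)) * (eps (Ftr (c*x)) - eps (Ftr (d*x)))
    with hf
  set γ : ℂ := ((2:ℂ)^m)⁻¹ * ∑ x ∈ T1, f x with hγ
  have habs : ‖γ‖ = 1 := by
    have h := hP
    unfold hasPEST at h
    rw [pest_val hm, ← hγ] at h
    have hnn := norm_nonneg γ
    nlinarith
  have habs' : ‖∑ x ∈ T1, f x‖ = (2:ℝ)^m := by
    have : ‖γ‖ = ((2:ℝ)^m)⁻¹ * ‖∑ x ∈ T1, f x‖ := by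
      rw [hγ, norm_mul, norm_inv, norm_pow, Complex.norm_two]
    rw [habs] at this
    have h2 : ((2:ℝ)^m) ≠ 0 := by positivity
    field_simp at this
    linarith
  have hcard : 2 * (T1.card : ℝ) = (2:ℝ)^m := by exact_mod_cast card_T1 (m := m) hm
  have hn1 : 1 ≤ T1.card := by
    have hnat := card_T1 (m := m) hm
    rw [← hT1] at hnat
    have hpow : 1 ≤ 2^m := Nat.one_le_two_pow
    omega
  have hfle : ∀ x : F2 m, ‖f x‖ ≤ 2 := by
    intro x
    rw [hf]
    simp only
    rw [norm_mul, abs_exp_I_int, one_mul]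
    calc ‖eps (Ftr (c*x)) - eps (Ftr (d*x))‖
        ≤ ‖eps (Ftr (c*x))‖ + ‖eps (Ftr (d*x))‖ := by
          simpa using norm_sub_le (eps (Ftr (c*x))) (eps (Ftr (d*x)))
    _ = 2 := by rw [eps_abs, eps_abs]; norm_num
  have hdc1 : d = c + 1 := by
    by_contra hne
    have hs0 : c + d ≠ 0 := fun h => h0 (h ▸ hcd)
    have hs1 : (1:F2 m) ≠ c + d := by
      intro h
      apply hne
      have := congrArg (fun z => c + z) h.symm
      simpa [← add_assoc, char_self] using this
    obtain ⟨xs, hxs1, hxs2⟩ := exists_tr (one_ne_zero) hs0 hs1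
    rw [one_mul] at hxs1
    have hxsT : xs ∈ T1 := by rw [hT1]; simp [hxs1]
    have hfxs : f xs = 0 := by
      have hd' : d * xs = c * xs + (c + d) * xs := by
        rw [add_mul, ← add_assoc, char_self (c*xs), zero_add]
      rw [hf]
      simp only
      rw [hd', Ftr_add, hxs2, eps_add, eps_zero, mul_one, sub_self, mul_zero]
    have hbound : ‖∑ x ∈ T1, f x‖ ≤ 2 * ((T1.card : ℝ) - 1) := by
      rw [← Finset.sum_erase_add T1 f hxsT, hfxs, add_zero]
      calc ‖∑ x ∈ T1.erase xs, f x‖ ≤ ∑ x ∈ T1.erase xs, ‖f x‖ := by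
            simpa using norm_sum_le (T1.erase xs) f
      _ ≤ ∑ _x ∈ T1.erase xs, (2:ℝ) := Finset.sum_le_sum (fun x _ => hfle x)
      _ = 2 * ((T1.card : ℝ) - 1) := by
          rw [Finset.sum_const, Finset.card_erase_of_mem hxsT, nsmul_eq_mul,
            Nat.cast_sub hn1]
          push_cast
          ring
    rw [habs'] at hbound
    linarith
  refine ⟨hdc1, ?_⟩
  have hfz : ∀ x ∈ T1, f x = 2 * (eps (Ftr (c*x)) * Complex.exp (Complex.I * t * (lamF S x))) := by
    intro x hx
    have hx1 : Ftr x = 1 := by rw [hT1] at hx; simpa using hx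
    have hd' : d * x = c * x + x := by rw [hdc1]; ring
    rw [hf]
    simp only
    rw [hd', Ftr_add, eps_add, hx1, eps_one]
    ring
  set z : F2 m → ℂ := fun x => eps (Ftr (c*x)) * Complex.exp (Complex.I * t * (lamF S x)) with hz
  have habsz : ∀ x, ‖z x‖ = 1 := by
    intro x
    rw [hz]
    simp only
    rw [norm_mul, eps_abs, abs_exp_I_int, one_mul]
  have hsz : ∑ x ∈ T1, z x = (T1.card : ℂ) * γ := by
    have h1 : ∑ x ∈ T1, f x = 2 * ∑ x ∈ T1, z x := by
      rw [Finset.mul_sum]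
      exact Finset.sum_congr rfl hfz
    have h2 : ((2:ℂ)^m) = 2 * (T1.card : ℂ) := by
      have hnat := card_T1 (m := m) hm
      rw [← hT1] at hnat
      have : ((2 * T1.card : ℕ) : ℂ) = ((2^m : ℕ) : ℂ) := by rw [hnat]
      push_cast at this
      linear_combination -this
    have hn0 : (T1.card : ℂ) ≠ 0 := Nat.cast_ne_zero.mpr (by omega)
    rw [hγ, h1, h2]
    field_simp
  have hconj : (starRingEnd ℂ) γ * γ = 1 := by
    rw [← Complex.normSq_eq_conj_mul_self]
    rw [← Complex.sq_norm, habs]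
    norm_num
  have hre_sum : ∑ x ∈ T1, ((starRingEnd ℂ) γ * z x).re = (T1.card : ℝ) := by
    have h1 : ∑ x ∈ T1, (starRingEnd ℂ) γ * z x = (T1.card : ℂ) := by
      rw [← Finset.mul_sum, hsz, mul_comm ((T1.card : ℂ)) γ, ← mul_assoc, hconj, one_mul]
    have h2 := congrArg Complex.re h1
    rw [Complex.re_sum] at h2
    simpa using h2
  have hre_le : ∀ x, ((starRingEnd ℂ) γ * z x).re ≤ 1 := by
    intro x
    calc ((starRingEnd ℂ) γ * z x).re ≤ ‖(starRingEnd ℂ) γ * z x‖ :=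
        Complex.re_le_norm _
    _ = 1 := by rw [norm_mul, Complex.norm_conj, habs, habsz, one_mul]
  have heach : ∀ x ∈ T1, ((starRingEnd ℂ) γ * z x).re = 1 := by
    by_contra h
    push_neg at h
    obtain ⟨x, hxT, hx⟩ := h
    have hlt : ((starRingEnd ℂ) γ * z x).re < 1 := lt_of_le_of_ne (hre_le x) hx
    have : ∑ x ∈ T1, ((starRingEnd ℂ) γ * z x).re < ∑ _x ∈ T1, (1:ℝ) :=
      Finset.sum_lt_sum (fun i _ => hre_le i) ⟨x, hxT, hlt⟩
    rw [hre_sum] at this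
    simp at this
  have hzγ : ∀ x ∈ T1, z x = γ := by
    intro x hx
    have h1 : (starRingEnd ℂ) γ * z x = 1 :=
      unit_re_one (by rw [norm_mul, Complex.norm_conj, habs, habsz, one_mul]) (heach x hx)
    have := congrArg (fun w => γ * w) h1
    simp only [mul_one] at this
    rw [← mul_assoc, mul_comm γ, hconj, one_mul] at this
    exact this
  intro x y hx hy
  have hxT : x ∈ T1 := by rw [hT1]; simp [hx]
  have hyT : y ∈ T1 := by rw [hT1]; simp [hy]
  rw [show eps (Ftr (c*x)) * Complex.exp (Complex.I * t * (lamF S x)) = z x from rfl,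
    show eps (Ftr (c*y)) * Complex.exp (Complex.I * t * (lamF S y)) = z y from rfl,
    hzγ x hxT, hzγ y hyT]

/-! ### Integrality helpers -/

lemma im_int_two_pi (n : ℤ) : ((n : ℂ) * (2 * Real.pi * Complex.I)).im = 2 * Real.pi * n := by
  simp [Complex.mul_im]
  ring

lemma int_of_exp {θ : ℝ} {e : ZMod 2} (h : Complex.exp (Complex.I * θ) = eps e) :
    ∃ k : ℤ, θ = k * Real.pi ∧ (Even k ↔ e = 0) := by
  rcases zmod2_cases e with he | he <;> subst he
  · rw [eps_zero, Complex.exp_eq_one_iff] at h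
    obtain ⟨n, hn⟩ := h
    have him := congrArg Complex.im hn
    rw [im_int_two_pi] at him
    simp [Complex.mul_im] at him
    refine ⟨2 * n, by push_cast; linarith, ?_⟩
    simp [Even]
    exact ⟨n, by ring⟩
  · rw [eps_one] at h
    have h2 : Complex.exp (Complex.I * θ - Real.pi * Complex.I) = 1 := by
      rw [Complex.exp_sub, h, Complex.exp_pi_mul_I]
      norm_num
    rw [Complex.exp_eq_one_iff] at h2
    obtain ⟨n, hn⟩ := h2
    have him := congrArg Complex.im hn
    rw [im_int_two_pi] at him
    simp [Complex.sub_im, Complex.mul_im] at him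
    refine ⟨2 * n + 1, by push_cast; linarith, ?_⟩
    constructor
    · intro hev
      exact absurd hev (by simp [Int.even_add_one, parity_simps])
    · intro h0
      exact absurd h0 (by decide)

lemma exp_I_pi_int (k : ℤ) :
    Complex.exp (Complex.I * (k * Real.pi)) = if Even k then 1 else -1 := by
  rcases Int.even_or_odd k with ⟨j, hj⟩ | ⟨j, hj⟩
  · rw [if_pos ⟨j, hj⟩, hj]
    have : Complex.I * (((j + j : ℤ) : ℂ) * (Real.pi : ℂ)) = (j:ℂ) * (2 * Real.pi * Complex.I) := by
      push_cast; ring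
    rw [this, Complex.exp_int_mul_two_pi_mul_I]
  · rw [if_neg (by simp [hj, Int.even_add_one, parity_simps] : ¬ Even k), hj]
    have : Complex.I * (((2*j + 1 : ℤ) : ℂ) * (Real.pi : ℂ))
        = (j:ℂ) * (2 * Real.pi * Complex.I) + Real.pi * Complex.I := by
      push_cast; ring
    rw [this, Complex.exp_add, Complex.exp_int_mul_two_pi_mul_I, Complex.exp_pi_mul_I, one_mul]

/-! ### The arithmetic core -/

lemma arith_master {ι : Type*} (D : Finset ι) (δ k : ι → ℤ) (e : ι → ZMod 2)
    (x₁ : ι) (hx₁D : x₁ ∈ D) (he₁ : e x₁ = 1)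
    (t : ℝ) (ht : 0 < t)
    (hk : ∀ x ∈ D, t * δ x = k x * Real.pi ∧ (Even (k x) ↔ e x = 0))
    (M : ℤ) (hM : M = D.gcd δ) :
    0 < M ∧ ∃ N : ℤ, 0 < N ∧ Odd N ∧ t = N * Real.pi / M ∧
      ∀ x ∈ D, k x * M = N * δ x := by
  have hπ := Real.pi_pos
  obtain ⟨hk₁, hpar₁⟩ := hk x₁ hx₁D
  have hk₁odd : ¬ Even (k x₁) := by rw [hpar₁, he₁]; decide
  have hδ₁ : δ x₁ ≠ 0 := by
    intro h
    rw [h] at hk₁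
    have : (k x₁ : ℝ) = 0 := by
      have := hk₁.symm
      simpa [Real.pi_ne_zero, mul_eq_zero] using this
    have : k x₁ = 0 := by exact_mod_cast this
    exact hk₁odd (this ▸ Even.zero)
  have hM0 : M ≠ 0 := fun h => hδ₁ (Finset.gcd_eq_zero_iff.mp (hM ▸ h) x₁ hx₁D)
  have hMpos : 0 < M := by
    have h1 : normalize M = M := hM ▸ Finset.normalize_gcd
    have h2 : 0 ≤ M := Int.nonneg_of_normalize_eq_self h1
    omega
  set g : ℕ := Int.gcd (k x₁) (δ x₁) with hg
  have hg0 : 0 < g := Int.gcd_pos_of_ne_zero_right _ hδ₁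
  have hgz : (g:ℤ) ≠ 0 := by exact_mod_cast hg0.ne'
  set a : ℤ := k x₁ / g with ha
  set b : ℤ := δ x₁ / g with hb
  have hka : (g:ℤ) * a = k x₁ := Int.mul_ediv_cancel' (Int.gcd_dvd_left _ _)
  have hdb : (g:ℤ) * b = δ x₁ := Int.mul_ediv_cancel' (Int.gcd_dvd_right _ _)
  have hab : Int.gcd a b = 1 := Int.gcd_div_gcd_div_gcd hg0
  have hb0 : b ≠ 0 := fun h => hδ₁ (by rw [← hdb, h, mul_zero])
  have hrel : ∀ x ∈ D, k x * b = a * δ x := by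
    intro x hxD
    obtain ⟨hkx, _⟩ := hk x hxD
    have hreal : (k x : ℝ) * δ x₁ = k x₁ * δ x := by
      have h1 : (k x : ℝ) * Real.pi * δ x₁ = k x₁ * Real.pi * δ x := by
        rw [← hkx, ← hk₁]; ring
      exact mul_left_cancel₀ (Real.pi_ne_zero)
        (by linarith [h1] : Real.pi * ((k x : ℝ) * δ x₁) = Real.pi * ((k x₁ : ℝ) * δ x))
    have hint : k x * δ x₁ = k x₁ * δ x := by exact_mod_cast hreal
    rw [← hka, ← hdb] at hint
    have : (g:ℤ) * (k x * b) = (g:ℤ) * (a * δ x) := by ring_nf; ring_nf at hint; linarith [hint]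
    exact mul_left_cancel₀ hgz this
  have hbdvd : ∀ x ∈ D, b ∣ δ x := by
    intro x hxD
    have h1 : b ∣ (δ x) * a := ⟨k x, by linear_combination -(hrel x hxD)⟩
    exact Int.dvd_of_dvd_mul_left_of_gcd_one h1 (by rw [Int.gcd_comm]; exact hab)
  have hbM : b ∣ M := hM ▸ Finset.dvd_gcd hbdvd
  set N : ℤ := a * (M / b) with hN
  have hMb : b * (M / b) = M := Int.mul_ediv_cancel' hbM
  have htb : t * b = a * Real.pi := by
    have h1 : t * ((g:ℤ) * b : ℤ) = ((g:ℤ) * a : ℤ) * Real.pi := by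
      rw [hdb, hka]; exact hk₁
    have h2 : (g:ℝ) * (t * b) = (g:ℝ) * (a * Real.pi) := by push_cast at h1 ⊢; linarith [h1]
    exact mul_left_cancel₀ (by exact_mod_cast hgz : (g:ℝ) ≠ 0) h2
  have htM : t * M = N * Real.pi := by
    have h0 : (M:ℝ) = (b:ℝ) * ((M/b : ℤ) : ℝ) := by
      exact_mod_cast congrArg (Int.cast : ℤ → ℝ) hMb.symm
    rw [hN]
    push_cast
    rw [h0]
    linear_combination ((M/b : ℤ) : ℝ) * htb
  have hMR : (0:ℝ) < (M:ℝ) := by exact_mod_cast hMpos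
  have htN : t = N * Real.pi / M := by
    field_simp
    linarith [htM]
  have hNpos : 0 < N := by
    have h1 : (0:ℝ) < N * Real.pi := by rw [← htM]; positivity
    have h2 : (0:ℝ) < (N:ℝ) := by
      by_contra h
      push_neg at h
      nlinarith
    exact_mod_cast h2
  have hkxM : ∀ x ∈ D, k x * M = N * δ x := by
    intro x hxD
    have h1 : k x * b * (M/b) = a * δ x * (M/b) := by rw [hrel x hxD]
    calc k x * M = k x * (b * (M/b)) := by rw [hMb]
    _ = a * δ x * (M/b) := by rw [← h1]; ring
    _ = N * δ x := by rw [hN]; ring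
  have hNodd : Odd N := by
    rw [← Int.not_even_iff_odd]
    intro hNe
    apply hk₁odd
    have hMd : M ∣ δ x₁ := hM ▸ Finset.gcd_dvd hx₁D
    have hu : M * (δ x₁ / M) = δ x₁ := Int.mul_ediv_cancel' hMd
    have h1 : k x₁ * M = N * (M * (δ x₁ / M)) := by rw [hu]; exact hkxM x₁ hx₁D
    have h2 : k x₁ = N * (δ x₁ / M) :=
      mul_right_cancel₀ hM0 (by linarith [h1] : k x₁ * M = (N * (δ x₁ / M)) * M)
    rw [h2]
    exact hNe.mul_right _
  exact ⟨hMpos, N, hNpos, hNodd, htN, hkxM⟩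

/-! ### The bridge -/

lemma bridge (S : Finset (F2 m)) (c x₀ : F2 m)
    (hx₀c : Ftr (c*x₀) = 0) (hc0 : c ≠ 0) (hc1 : c ≠ 1) (t : ℝ) (ht : 0 < t)
    (hzz : ∀ x, Ftr x = 1 → eps (Ftr (c*x)) * Complex.exp (Complex.I * t * (lamF S x))
        = Complex.exp (Complex.I * t * (lamF S x₀)))
    (M : ℤ) (hM : M = (univ.filter (fun x : GaloisField 2 m => Ftr x = 1 ∧ x ≠ x₀)).gcd
      (fun x => lamF S x₀ - lamF S x)) :
    0 < M ∧ ∃ N : ℤ, 0 < N ∧ Odd N ∧ t = N * Real.pi / M ∧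
      ∀ x ∈ (univ.filter (fun x : GaloisField 2 m => Ftr x = 1 ∧ x ≠ x₀)),
        (Even ((lamF S x₀ - lamF S x) / M) ↔ Ftr (c*x) = 0) := by
  set D := univ.filter (fun x : GaloisField 2 m => Ftr x = 1 ∧ x ≠ x₀) with hD
  set δ : F2 m → ℤ := fun x => lamF S x₀ - lamF S x with hδ
  have hmemD : ∀ x, x ∈ D ↔ (Ftr x = 1 ∧ x ≠ x₀) := by
    intro x
    rw [hD, Finset.mem_filter]
    simp
  have hex : ∀ x ∈ D, Complex.exp (Complex.I * ((t * (δ x : ℝ) : ℝ) : ℂ)) = eps (Ftr (c*x)) := by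
    intro x hx
    have hx1 : Ftr x = 1 := ((hmemD x).mp hx).1
    have h1 := hzz x hx1
    have h2 : Complex.exp (Complex.I * ((t * (δ x : ℝ) : ℝ) : ℂ))
        * Complex.exp (Complex.I * t * (lamF S x))
        = Complex.exp (Complex.I * t * (lamF S x₀)) := by
      rw [← Complex.exp_add]
      congr 1
      rw [hδ]
      push_cast
      ring
    rw [← h1] at h2
    exact mul_right_cancel₀ (Complex.exp_ne_zero _) h2
  have hkex : ∀ x : F2 m, ∃ kk : ℤ, x ∈ D →
      (t * δ x = kk * Real.pi ∧ (Even kk ↔ Ftr (c*x) = 0)) := by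
    intro x
    by_cases hx : x ∈ D
    · obtain ⟨kk, hk1, hk2⟩ := int_of_exp (hex x hx)
      exact ⟨kk, fun _ => ⟨hk1, hk2⟩⟩
    · exact ⟨0, fun h => absurd h hx⟩
  choose k hk using hkex
  have hc1' : c + 1 ≠ 0 := by
    intro h
    apply hc1
    have := congrArg (fun z => z + 1) h
    simpa [add_assoc, char_self] using this
  have h1c : (1:F2 m) ≠ c + 1 := by
    intro h
    apply hc0
    have := congrArg (fun z => z + 1) h.symm
    simpa [add_assoc, char_self] using this
  obtain ⟨x₁, hx₁a, hx₁b⟩ := exists_tr (one_ne_zero) hc1' h1c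
  rw [one_mul] at hx₁a
  have hcx₁ : Ftr (c * x₁) = 1 := by
    have h1 : (c+1) * x₁ = c * x₁ + x₁ := by ring
    rw [h1, Ftr_add, hx₁a] at hx₁b
    rcases zmod2_cases (Ftr (c * x₁)) with h | h
    · rw [h] at hx₁b
      exact absurd hx₁b (by decide)
    · exact h
  have hx₁x₀ : x₁ ≠ x₀ := by
    intro h
    rw [h, hx₀c] at hcx₁
    exact absurd hcx₁ (by decide)
  have hx₁D : x₁ ∈ D := (hmemD x₁).mpr ⟨hx₁a, hx₁x₀⟩
  obtain ⟨hMpos, N, hNpos, hNodd, htN, hkM⟩ :=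
    arith_master D δ k (fun x => Ftr (c*x)) x₁ hx₁D hcx₁ t ht (fun x hx => hk x hx) M hM
  refine ⟨hMpos, N, hNpos, hNodd, htN, ?_⟩
  intro x hxD
  have hMd : M ∣ δ x := hM ▸ Finset.gcd_dvd hxD
  have hu : M * (δ x / M) = δ x := Int.mul_ediv_cancel' hMd
  have h2 : k x = N * (δ x / M) := by
    refine mul_right_cancel₀ hMpos.ne' ?_
    calc k x * M = N * δ x := hkM x hxD
    _ = N * (M * (δ x / M)) := by rw [hu]
    _ = N * (δ x / M) * M := by ring
  have hNe : ¬ Even N := Int.not_even_iff_odd.mpr hNodd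
  have := (hk x hxD).2
  rw [← this, h2, Int.even_mul]
  tauto

/-! ### PEST at a given time from the constancy property -/

lemma pest_at (hm : 1 ≤ m) (S : Finset (F2 m)) (c x₀ : F2 m)
    (hx₀1 : Ftr x₀ = 1) (t₀ : ℝ)
    (hconst : ∀ x, Ftr x = 1 → eps (Ftr (c*x)) * Complex.exp (Complex.I * t₀ * (lamF S x))
        = Complex.exp (Complex.I * t₀ * (lamF S x₀))) :
    hasPEST S 0 1 c (c+1) t₀ := by
  unfold hasPEST
  rw [pest_val hm]
  set T1 := univ.filter (fun x : F2 m => Ftr x = 1) with hT1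
  have hsum : ∀ x ∈ T1,
      Complex.exp (Complex.I * t₀ * (lamF S x)) * (eps (Ftr (c*x)) - eps (Ftr ((c+1)*x)))
      = 2 * Complex.exp (Complex.I * t₀ * (lamF S x₀)) := by
    intro x hx
    have hx1 : Ftr x = 1 := by rw [hT1] at hx; simpa using hx
    have hd' : (c+1) * x = c * x + x := by ring
    rw [hd', Ftr_add, eps_add, hx1, eps_one]
    have h1 := hconst x hx1
    calc Complex.exp (Complex.I * t₀ * (lamF S x))
          * (eps (Ftr (c*x)) - eps (Ftr (c*x)) * (-1))
        = 2 * (eps (Ftr (c*x)) * Complex.exp (Complex.I * t₀ * (lamF S x))) := by ring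
    _ = 2 * Complex.exp (Complex.I * t₀ * (lamF S x₀)) := by rw [h1]
  rw [Finset.sum_congr rfl hsum, Finset.sum_const, nsmul_eq_mul]
  have h2 : ((2:ℂ)^m) = 2 * (T1.card : ℂ) := by
    have hnat := card_T1 (m := m) hm
    rw [← hT1] at hnat
    have : ((2 * T1.card : ℕ) : ℂ) = ((2^m : ℕ) : ℂ) := by rw [hnat]
    push_cast at this
    linear_combination -this
  have hn0 : (T1.card : ℂ) ≠ 0 := by
    refine Nat.cast_ne_zero.mpr (Finset.card_ne_zero_of_mem (a := x₀) ?_)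
    rw [hT1]
    simp [hx₀1]
  have hval : ((2:ℂ)^m)⁻¹ * ((T1.card : ℂ) * (2 * Complex.exp (Complex.I * t₀ * (lamF S x₀))))
      = Complex.exp (Complex.I * t₀ * (lamF S x₀)) := by
    rw [h2]
    field_simp
  rw [hval, abs_exp_I_int]
  norm_num

end Aux

/-- If `Cay(𝔽_{2^m}, S)` has PEST from `(0,1)` to `(c,d)` at time `t`, then
`t = (2u+1)π/M` for some non-negative integer `u`, where
`M = gcd{λ_{x₀} - λ_x : x ∈ T₁, x ≠ x₀}`; in particular the minimum PEST time is `π/M`. -/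
theorem hasPEST_time_form {m : ℕ} (hm : 1 ≤ m)
    (S : Finset (GaloisField 2 m)) (h0 : (0 : GaloisField 2 m) ∉ S)
    (h1 : (1 : GaloisField 2 m) ∈ S)
    (hgen : AddSubgroup.closure (S : Set (GaloisField 2 m)) = ⊤)
    (c d : GaloisField 2 m) (hcd : c + d ∈ S) (hc0 : c ≠ 0) (hc1 : c ≠ 1)
    (t : ℝ) (ht : 0 < t) (hP : hasPEST S 0 1 c d t)
    (x₀ : GaloisField 2 m) (hx₀ : Ftr (c * x₀) = 0 ∧ Ftr x₀ = 1)
    (M : ℤ)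
    (hM : M = (univ.filter (fun x : GaloisField 2 m => Ftr x = 1 ∧ x ≠ x₀)).gcd
      (fun x => lamF S x₀ - lamF S x)) :
    (∃ u : ℕ, t = (2 * u + 1) * Real.pi / M) ∧
      IsLeast {t' : ℝ | 0 < t' ∧ hasPEST S 0 1 c d t'} (Real.pi / M) := by
  obtain ⟨hx₀c, hx₀1⟩ := hx₀
  obtain ⟨hdc1, hzpair⟩ := main_core hm S h0 c d hcd t hP
  have hzz : ∀ x, Ftr x = 1 →
      eps (Ftr (c*x)) * Complex.exp (Complex.I * t * (lamF S x))
        = Complex.exp (Complex.I * t * (lamF S x₀)) := by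
    intro x hx
    have h := hzpair x x₀ hx hx₀1
    rw [hx₀c, eps_zero, one_mul] at h
    exact h
  obtain ⟨hMpos, N, hNpos, hNodd, htN, hpar⟩ := bridge S c x₀ hx₀c hc0 hc1 t ht hzz M hM
  have hMR : (0:ℝ) < (M:ℝ) := by exact_mod_cast hMpos
  have hconst : ∀ x, Ftr x = 1 →
      eps (Ftr (c*x)) * Complex.exp (Complex.I * ((Real.pi / (M:ℝ) : ℝ) : ℂ) * (lamF S x))
        = Complex.exp (Complex.I * ((Real.pi / (M:ℝ) : ℝ) : ℂ) * (lamF S x₀)) := by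
    intro x hx
    by_cases hxx : x = x₀
    · subst hxx
      rw [hx₀c, eps_zero, one_mul]
    · have hxD : x ∈ univ.filter (fun x : GaloisField 2 m => Ftr x = 1 ∧ x ≠ x₀) := by
        rw [Finset.mem_filter]
        exact ⟨Finset.mem_univ _, hx, hxx⟩
      have hMd : M ∣ (lamF S x₀ - lamF S x) := hM ▸ Finset.gcd_dvd hxD
      set u : ℤ := (lamF S x₀ - lamF S x) / M with hudef
      have hu : M * u = lamF S x₀ - lamF S x := Int.mul_ediv_cancel' hMd
      have hpx : Even u ↔ Ftr (c*x) = 0 := hpar x hxD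
      have ht₀δ : (Real.pi / (M:ℝ)) * ((lamF S x₀ - lamF S x : ℤ) : ℝ) = u * Real.pi := by
        have : ((lamF S x₀ - lamF S x : ℤ) : ℝ) = (M:ℝ) * (u:ℝ) := by exact_mod_cast hu.symm
        rw [this]
        field_simp
      have hev : Complex.exp (Complex.I *
          (((Real.pi / (M:ℝ)) * ((lamF S x₀ - lamF S x : ℤ) : ℝ) : ℝ) : ℂ))
          = eps (Ftr (c*x)) := by
        rw [ht₀δ]
        have hcast : ((u * Real.pi : ℝ) : ℂ) = (u:ℂ) * (Real.pi:ℂ) := by push_cast; ring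
        rw [hcast, exp_I_pi_int u]
        rcases zmod2_cases (Ftr (c*x)) with h | h <;> rw [h]
        · rw [if_pos (hpx.mpr h), eps_zero]
        · rw [if_neg, eps_one]
          intro hEv
          have h0 := hpx.mp hEv
          rw [h] at h0
          exact absurd h0 (by decide)
      have hsplit : Complex.exp (Complex.I * ((Real.pi / (M:ℝ) : ℝ) : ℂ) * (lamF S x₀))
          = Complex.exp (Complex.I * ((Real.pi / (M:ℝ) : ℝ) : ℂ) * (lamF S x))
            * Complex.exp (Complex.I *
              (((Real.pi / (M:ℝ)) * ((lamF S x₀ - lamF S x : ℤ) : ℝ) : ℝ) : ℂ)) := by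
        rw [← Complex.exp_add]
        congr 1
        push_cast
        ring
      rw [hsplit, hev]
      ring
  constructor
  · obtain ⟨j, hj⟩ := hNodd
    have hj0 : 0 ≤ j := by omega
    refine ⟨j.toNat, ?_⟩
    rw [htN, hj]
    congr 1
    have hjj : ((j.toNat : ℕ) : ℝ) = (j : ℝ) := by
      exact_mod_cast Int.toNat_of_nonneg hj0
    push_cast
    rw [hjj]
  · constructor
    · refine ⟨div_pos Real.pi_pos hMR, ?_⟩
      have hpest := pest_at hm S c x₀ hx₀1 (Real.pi / (M:ℝ)) hconst
      rw [hdc1]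
      exact hpest
    · rintro t' ⟨ht', hP'⟩
      obtain ⟨hdc1', hzpair'⟩ := main_core hm S h0 c d hcd t' hP'
      have hzz' : ∀ x, Ftr x = 1 →
          eps (Ftr (c*x)) * Complex.exp (Complex.I * t' * (lamF S x))
            = Complex.exp (Complex.I * t' * (lamF S x₀)) := by
        intro x hx
        have h := hzpair' x x₀ hx hx₀1
        rw [hx₀c, eps_zero, one_mul] at h
        exact h
      obtain ⟨_, N', hN'pos, hN'odd, htN', _⟩ := bridge S c x₀ hx₀c hc0 hc1 t' ht' hzz' M hM
      rw [htN']
      have h1 : (1:ℝ) ≤ (N':ℝ) := by exact_mod_cast hN'pos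
      rw [div_le_div_iff₀ hMR hMR]
      have h2 : (1:ℝ) * Real.pi ≤ (N':ℝ) * Real.pi :=
        mul_le_mul_of_nonneg_right h1 Real.pi_pos.le
      have h3 : (1:ℝ) * Real.pi * (M:ℝ) ≤ (N':ℝ) * Real.pi * (M:ℝ) :=
        mul_le_mul_of_nonneg_right h2 hMR.le
      linarith


end
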